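/- arXiv:2511.14162 — 2 statements merged into one kernel-verified Lean document; each statement's English description precedes it below -/
import Mathlib

section
/- Given the bounds L_LGA ≤ (1/2)(L* + L_split) with L_split = n·c + n·γ·c (writing Σ_u s(u)λ(u) = n·γ·c for γ = (1/(n·c))·Σ_u s(u)λ(u)), and L* ≥ c + n·γ·c, the ratio bound L_LGA ≤ (1 + (n-1)/(2 + 2γn))·L* holds, and as n → ∞ this bound converges to (1 + 1/(2γ))·L*. -/
/-- Given `L*_n ≥ c(1 + γn)` and `L^LGA_n ≤ (L*_n + n·c·(1+γ))/2`, the ratio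
bound `L^LGA_n ≤ (1 + (n-1)/(2 + 2γn))·L*_n` holds for every `n ≥ 1`, and the
coefficient `1 + (n-1)/(2 + 2γn)` tends to `1 + 1/(2γ)` as `n → ∞`. -/
theorem stmt8 (c γ : ℝ) (hc : 0 < c) (hγ : 0 < γ)
    (Lstar Llga : ℕ → ℝ)
    (hstar : ∀ n : ℕ, 1 ≤ n → c * (1 + γ * n) ≤ Lstar n)
    (hlga : ∀ n : ℕ, 1 ≤ n → Llga n ≤ (Lstar n + (n : ℝ) * c * (1 + γ)) / 2) :
    (∀ n : ℕ, 1 ≤ n →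
        Llga n ≤ (1 + ((n : ℝ) - 1) / (2 + 2 * γ * n)) * Lstar n) ∧
    Filter.Tendsto (fun n : ℕ => 1 + ((n : ℝ) - 1) / (2 + 2 * γ * n))
      Filter.atTop (nhds (1 + 1 / (2 * γ))) := by
  constructor
  · intro n hn
    have hn1 : (1 : ℝ) ≤ (n : ℝ) := by exact_mod_cast hn
    have hden : (0 : ℝ) < 2 + 2 * γ * n := by positivity
    have hs := hstar n hn
    have hl := hlga n hn
    have key : (n : ℝ) * c * (1 + γ) ≤ Lstar n + ((n : ℝ) - 1) / (2 + 2 * γ * n) * (2 * Lstar n) := by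
      have h1 : ((n : ℝ) - 1) / (2 + 2 * γ * n) * (2 * (c * (1 + γ * n)))
          ≤ ((n : ℝ) - 1) / (2 + 2 * γ * n) * (2 * Lstar n) := by
        apply mul_le_mul_of_nonneg_left (by linarith) (div_nonneg (by linarith) hden.le)
      have h2 : ((n : ℝ) - 1) / (2 + 2 * γ * n) * (2 * (c * (1 + γ * n)))
          = ((n : ℝ) - 1) * c := by
        field_simp
      nlinarith [hs]
    calc Llga n ≤ (Lstar n + (n : ℝ) * c * (1 + γ)) / 2 := hl
      _ ≤ (Lstar n + (Lstar n + ((n : ℝ) - 1) / (2 + 2 * γ * n) * (2 * Lstar n))) / 2 := by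
          linarith
      _ = (1 + ((n : ℝ) - 1) / (2 + 2 * γ * n)) * Lstar n := by ring
  · have h1 : Filter.Tendsto (fun x : ℝ => 1 + (x - 1) / (2 + 2 * γ * x))
        Filter.atTop (nhds (1 + 1 / (2 * γ))) := by
      have hev : ∀ᶠ x : ℝ in Filter.atTop,
          1 + (1 - x⁻¹) / (2 * x⁻¹ + 2 * γ) = 1 + (x - 1) / (2 + 2 * γ * x) := by
        filter_upwards [Filter.eventually_gt_atTop 0] with x hx
        have hx' : x ≠ 0 := ne_of_gt hx
        field_simp
      refine Filter.Tendsto.congr' hev ?_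
      have hinv : Filter.Tendsto (fun x : ℝ => x⁻¹) Filter.atTop (nhds 0) :=
        tendsto_inv_atTop_zero
      have hnum : Filter.Tendsto (fun x : ℝ => 1 - x⁻¹) Filter.atTop (nhds 1) := by
        simpa using (tendsto_const_nhds.sub hinv)
      have hden : Filter.Tendsto (fun x : ℝ => 2 * x⁻¹ + 2 * γ) Filter.atTop (nhds (2 * γ)) := by
        have := (hinv.const_mul 2).add (tendsto_const_nhds (x := 2 * γ))
        simpa using this
      have := hnum.div hden (by positivity)
      simpa using (tendsto_const_nhds (x := (1:ℝ))).add this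
    exact h1.comp tendsto_natCast_atTop_atTop
end

section
/- Every active variable's pod is connected to an accessed variable's pod in the prior pod graph: combining locality and pod-lifting, if variable u is connected in the current object graph G to some accessed variable v ∈ V_C, then pod(u) is connected to pod(v') in the prior pod graph G⁰_p for some accessed variable v' ∈ V_C. -/
/-- Every active variable's pod is connected to an accessed variable's pod in
the prior pod graph: under execution locality (every added edge has both
endpoints connected in the prior graph `E0` to some accessed variable in `VC`),
if `u` is connected in the post-execution graph `E` to some accessed variable,
then `pod u` is connected in the prior pod graph to the pod of some accessed
variable. -/
theorem stmt17 {V P : Type*} (E0 Eadd E : V → V → Prop) (VC : Set V)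
    (pod : V → P)
    (hE : ∀ a b, E a b → E0 a b ∨ Eadd a b)
    (hloc : ∀ a b, Eadd a b →
      (∃ v ∈ VC, (SimpleGraph.fromRel E0).Reachable a v) ∧
      (∃ v ∈ VC, (SimpleGraph.fromRel E0).Reachable b v))
    (u : V)
    (hactive : ∃ v ∈ VC, (SimpleGraph.fromRel E).Reachable u v) :
    ∃ v' ∈ VC,
      (SimpleGraph.fromRel
          (fun p q => ∃ a b : V, pod a = p ∧ pod b = q ∧ E0 a b)).Reachable
        (pod u) (pod v') := by
  set PG : SimpleGraph P := SimpleGraph.fromRel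
      (fun p q => ∃ a b : V, pod a = p ∧ pod b = q ∧ E0 a b) with hPG
  -- lifting lemma
  have lift : ∀ a b : V, (SimpleGraph.fromRel E0).Reachable a b →
      PG.Reachable (pod a) (pod b) := by
    intro a b hab
    obtain ⟨w⟩ := hab
    induction w with
    | nil => exact SimpleGraph.Reachable.refl _
    | cons h _ ih =>
      rename_i x y z hw
      refine SimpleGraph.Reachable.trans ?_ ih
      obtain ⟨hne, h0⟩ := h
      by_cases hp : pod x = pod y
      · rw [hp]
      · refine SimpleGraph.Adj.reachable ?_
        refine ⟨hp, ?_⟩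
        rcases h0 with h0 | h0
        · exact Or.inl ⟨x, y, rfl, rfl, h0⟩
        · exact Or.inr ⟨y, x, rfl, rfl, h0⟩
  have key : ∀ (a b : V), (SimpleGraph.fromRel E).Walk a b → b ∈ VC →
      ∃ v' ∈ VC, PG.Reachable (pod a) (pod v') := by
    intro a b w
    induction w with
    | nil => intro hb; exact ⟨_, hb, SimpleGraph.Reachable.refl _⟩
    | cons h _ ih =>
      rename_i x y z hw
      intro hb
      obtain ⟨v', hv', hr⟩ := ih hb
      obtain ⟨hne, hE'⟩ := h
      -- step lemma: either pod x reaches pod y, or x is anchored to VC via E0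
      have step : PG.Reachable (pod x) (pod y) ∨
          (∃ w ∈ VC, (SimpleGraph.fromRel E0).Reachable x w) := by
        have fromE0 : ∀ (h0 : E0 x y ∨ E0 y x), PG.Reachable (pod x) (pod y) := by
          intro h0
          by_cases hp : pod x = pod y
          · rw [hp]
          · refine SimpleGraph.Adj.reachable ⟨hp, ?_⟩
            rcases h0 with h0 | h0
            · exact Or.inl ⟨x, y, rfl, rfl, h0⟩
            · exact Or.inr ⟨y, x, rfl, rfl, h0⟩
        rcases hE' with hxy | hyx
        · rcases hE _ _ hxy with h0 | hadd
          · exact Or.inl (fromE0 (Or.inl h0))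
          · exact Or.inr (hloc _ _ hadd).1
        · rcases hE _ _ hyx with h0 | hadd
          · exact Or.inl (fromE0 (Or.inr h0))
          · exact Or.inr (hloc _ _ hadd).2
      rcases step with h1 | ⟨w1, hw1, hr1⟩
      · exact ⟨v', hv', h1.trans hr⟩
      · exact ⟨w1, hw1, lift _ _ hr1⟩
  obtain ⟨v, hv, hr⟩ := hactive
  obtain ⟨w⟩ := hr
  exact key u v w hv
end
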